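/- Suppose the Lebesgue measure extends to a total countably additive measure, i.e., there is a countably additive measure μ defined on all subsets of ℝ which agrees with Lebesgue measure on all Lebesgue measurable sets. Then every normalized weakly null sequence (x_α)_{α < 2^{ℵ₀}} of length continuum in a Banach space X contains an infinite unconditional basic subsequence: there exist an infinite set A of indices and a constant K ≥ 1 such that for every finite s ⊆ A, every family of scalars (a_α)_{α∈s}, and every t ⊆ s one has ‖Σ_{α∈t} a_α x_α‖ ≤ K·‖Σ_{α∈s} a_α x_α‖. -/

import Mathlib

open Cardinal Set MeasureTheory

noncomputable section
namespace Stmt8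

/-- `ω₁` as a type: ordinals below `(succ ℵ₀).ord`. -/
def W : Type 1 := ↥(Set.Iio (Order.succ (ℵ₀ : Cardinal.{0})).ord)

instance : LinearOrder W := by unfold W; infer_instance
instance : WellFoundedLT W := by
  have : WellFoundedLT (Subtype (· ∈ Set.Iio (Order.succ (ℵ₀ : Cardinal.{0})).ord)) :=
    Subtype.wellFoundedLT _
  exact this

instance : MeasurableSpace W := ⊤

lemma W.meas (s : Set W) : MeasurableSet s := MeasurableSpace.measurableSet_top

lemma W.mk_eq : #W = Order.succ ℵ₀ := by
  have : #W = #(Set.Iio (Order.succ (ℵ₀ : Cardinal.{0})).ord) := rfl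
  rw [this, Ordinal.mk_Iio_ordinal, Cardinal.card_ord, Cardinal.lift_succ, Cardinal.lift_aleph0]

lemma W.not_countable : ¬ Countable W := by
  intro h
  have := Cardinal.mk_le_aleph0_iff.2 h
  rw [W.mk_eq] at this
  exact absurd this (not_le.2 (Order.lt_succ _))

lemma W.nonempty : Nonempty W := by
  refine ⟨⟨0, ?_⟩⟩
  simpa using (Cardinal.isRegular_succ (le_refl ℵ₀)).ord_pos

lemma W.initial_countable (b : W) : Set.Countable {c : W | c < b} := by
  rw [← Set.countable_coe_iff]
  rw [← Cardinal.mk_le_aleph0_iff]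
  have hinj : Function.Injective (fun c : {c : W | c < b} => (⟨c.1.1, c.2⟩ : Set.Iio (b.1 : Ordinal))) := by
    intro c d h
    simp only [Subtype.mk.injEq] at h
    have h' := congrArg Subtype.val h
    exact Subtype.ext (Subtype.ext h')
  have h1 : #{c : W | c < b} ≤ #(Set.Iio (b.1 : Ordinal)) := Cardinal.mk_le_of_injective hinj
  have h2 : #(Set.Iio (b.1 : Ordinal)) = Cardinal.lift.{1} (b.1 : Ordinal).card :=
    Ordinal.mk_Iio_ordinal _
  have h3 : (b.1 : Ordinal).card ≤ ℵ₀ := by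
    have := b.2
    rw [Set.mem_Iio, Cardinal.lt_ord] at this
    exact Order.lt_succ_iff.1 this
  calc #{c : W | c < b} ≤ Cardinal.lift.{1} (b.1 : Ordinal).card := h2 ▸ h1
    _ ≤ Cardinal.lift.{1} ℵ₀ := Cardinal.lift_le.2 h3
    _ = ℵ₀ := Cardinal.lift_aleph0

lemma W.countable_bounded {Ξ : Set W} (h : Ξ.Countable) : ∃ B : W, ∀ c ∈ Ξ, c ≤ B := by
  rcases Ξ.eq_empty_or_nonempty with rfl | hne
  · exact ⟨Classical.choice W.nonempty, by simp⟩
  obtain ⟨f, rfl⟩ := h.exists_eq_range hne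
  have hlt : ∀ n, ((f n).1 : Ordinal) < (Order.succ (ℵ₀ : Cardinal.{0})).ord := fun n => (f n).2
  have hs : (⨆ n, ((f n).1 : Ordinal)) < (Order.succ (ℵ₀ : Cardinal.{0})).ord := by
    apply Ordinal.iSup_lt_ord _ hlt
    rw [(Cardinal.isRegular_succ (le_refl ℵ₀)).cof_eq, Cardinal.mk_nat]
    exact Order.lt_succ _
  refine ⟨⟨_, hs⟩, ?_⟩
  rintro c ⟨n, rfl⟩
  exact Subtype.coe_le_coe.1 (Ordinal.le_iSup (fun n => ((f n).1 : Ordinal)) n)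

lemma W.exists_gt (b : W) : ∃ c : W, b < c := by
  refine ⟨⟨Order.succ (b.1 : Ordinal), ?_⟩, ?_⟩
  · exact (Cardinal.isSuccLimit_ord (Order.le_succ _)).succ_lt b.2
  · have : (b.1 : Ordinal) < Order.succ (b.1 : Ordinal) := Order.lt_succ _
    exact this

end Stmt8

namespace Stmt8
open MeasureTheory ENNReal

/-- Ulam's theorem: a countably additive finite measure defined on all subsets of `ω₁`
with null singletons is identically zero. -/
theorem ulam (ν : Measure W) (hfin : ν Set.univ ≠ ⊤) (hpt : ∀ b : W, ν {b} = 0) :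
    ν Set.univ = 0 := by
  by_contra hne
  haveI : NullSingletonClass ν := ⟨hpt⟩
  -- injections of initial segments into ℕ
  have hcnt : ∀ b : W, ∃ f : {c : W // c < b} → ℕ, Function.Injective f := by
    intro b
    have : Countable {c : W // c < b} := Set.countable_coe_iff.2 (W.initial_countable b)
    exact (countable_iff_exists_injective _).1 this
  choose ι hι using hcnt
  set A : ℕ → W → Set W := fun n ξ => {b | ∃ h : ξ < b, ι b ⟨ξ, h⟩ = n} with hA
  -- rows cover the final segments
  have hrow : ∀ ξ : W, (⋃ n, A n ξ) = {b | ξ < b} := by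
    intro ξ
    ext b
    simp only [Set.mem_iUnion, Set.mem_setOf_eq, hA]
    constructor
    · rintro ⟨n, h, -⟩; exact h
    · intro h; exact ⟨ι b ⟨ξ, h⟩, h, rfl⟩
  have hfinal : ∀ ξ : W, ν {b | ξ < b} ≠ 0 := by
    intro ξ h0
    have hcle : Set.Countable {b : W | b ≤ ξ} := by
      have : {b : W | b ≤ ξ} = insert ξ {b : W | b < ξ} := by
        ext b; simp [le_iff_lt_or_eq, or_comm]
      rw [this]
      exact (W.initial_countable ξ).insert ξ
    have hcover : (Set.univ : Set W) ⊆ {b | b ≤ ξ} ∪ {b | ξ < b} := by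
      intro b _; rcases le_or_gt b ξ with h | h
      · exact Or.inl h
      · exact Or.inr h
    have := measure_mono (μ := ν) hcover
    have hle := this.trans (measure_union_le _ _)
    rw [hcle.measure_zero, h0, add_zero] at hle
    exact hne (le_antisymm hle (zero_le))
  -- pick a positive cell in each row
  have hcell : ∀ ξ : W, ∃ n : ℕ, ν (A n ξ) ≠ 0 := by
    intro ξ
    by_contra h
    push_neg at h
    have := measure_iUnion_null (μ := ν) h
    rw [hrow ξ] at this
    exact hfinal ξ this
  choose n hn using hcell
  have hk : ∀ ξ : W, ∃ k : ℕ, (k : ℝ≥0∞)⁻¹ < ν (A (n ξ) ξ) := fun ξ =>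
    ENNReal.exists_inv_nat_lt (hn ξ)
  choose k hkk using hk
  -- an infinite fiber
  obtain ⟨p, hp⟩ : ∃ p : ℕ × ℕ, ¬ (Set.Countable {ξ : W | (n ξ, k ξ) = p}) := by
    by_contra h
    push_neg at h
    have : (Set.univ : Set W).Countable := by
      have : (Set.univ : Set W) = ⋃ p : ℕ × ℕ, {ξ : W | (n ξ, k ξ) = p} := by
        ext ξ; simp
      rw [this]
      exact Set.countable_iUnion h
    exact W.not_countable (Set.countable_univ_iff.1 this)
  have hpinf : {ξ : W | (n ξ, k ξ) = p}.Infinite := by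
    intro hfin'
    exact hp hfin'.countable
  -- disjoint columns
  have hdisj : ∀ ξ ξ' : W, ξ ≠ ξ' → ∀ m : ℕ, Disjoint (A m ξ) (A m ξ') := by
    intro ξ ξ' hne' m
    rw [Set.disjoint_left]
    rintro b ⟨h1, e1⟩ ⟨h2, e2⟩
    apply hne'
    have := hι b (e1.trans e2.symm)
    exact congrArg Subtype.val this
  -- choose enough elements of the fiber
  set ε : ℝ≥0∞ := (p.2 : ℝ≥0∞)⁻¹ with hε
  have hεlt : ∀ ξ ∈ {ξ : W | (n ξ, k ξ) = p}, ε < ν (A p.1 ξ) := by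
    intro ξ hξ
    have h1 : n ξ = p.1 := congrArg Prod.fst hξ
    have h2 : k ξ = p.2 := congrArg Prod.snd hξ
    rw [hε, ← h1, ← h2]
    exact hkk ξ
  have hεne : ε ≠ 0 := by
    simp [hε]
  obtain ⟨N, hN⟩ : ∃ N : ℕ, ν Set.univ < N * ε := by
    have hdiv : ν Set.univ / ε ≠ ⊤ := by
      rw [ENNReal.div_eq_inv_mul]
      exact ENNReal.mul_ne_top (by simp [hε]) hfin
    obtain ⟨N, hN⟩ := ENNReal.exists_nat_gt hdiv
    refine ⟨N, ?_⟩
    rw [ENNReal.div_lt_iff (Or.inl hεne) (Or.inr hfin)] at hN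
    exact hN
  obtain ⟨Φ, hΦsub, hΦcard⟩ := hpinf.exists_subset_card_eq N
  have hsum : (N : ℝ≥0∞) * ε ≤ ν Set.univ := by
    have h1 : ∀ ξ ∈ Φ, ε ≤ ν (A p.1 ξ) := fun ξ hξ => (hεlt ξ (hΦsub hξ)).le
    have h2 : (N : ℝ≥0∞) * ε = ∑ _ξ ∈ Φ, ε := by
      rw [Finset.sum_const, hΦcard, nsmul_eq_mul]
    rw [h2]
    calc ∑ ξ ∈ Φ, ε ≤ ∑ ξ ∈ Φ, ν (A p.1 ξ) := Finset.sum_le_sum h1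
      _ = ν (⋃ ξ ∈ Φ, A p.1 ξ) := by
          refine (measure_biUnion_finset ?_ (fun _ _ => W.meas _)).symm
          intro ξ hξ ξ' hξ' hne'
          exact hdisj ξ ξ' hne' p.1
      _ ≤ ν Set.univ := measure_mono (Set.subset_univ _)
  exact absurd hN (not_lt.2 hsum)

end Stmt8

namespace Stmt8
open MeasureTheory ENNReal

universe u

variable {Ω : Type u} [MeasurableSpace Ω]

/-- Unions of `ω₁`-many null sets are null (for a finite measure defined on all sets). -/
theorem nullUnion (hms : ∀ s : Set Ω, MeasurableSet s) (M : Measure Ω)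
    (hfin : M Set.univ ≠ ⊤) (Y : W → Set Ω) (hY : ∀ b, M (Y b) = 0) :
    M (⋃ b, Y b) = 0 := by
  by_contra hne
  set Z : W → Set Ω := fun b => Y b \ ⋃ c, ⋃ (_ : c < b), Y c with hZ
  have hZdisj : ∀ b b' : W, b ≠ b' → Disjoint (Z b) (Z b') := by
    have key : ∀ b b' : W, b < b' → Disjoint (Z b) (Z b') := by
      intro b b' hlt
      rw [Set.disjoint_left]
      rintro γ ⟨hγ, -⟩ ⟨-, hno⟩
      exact hno (Set.mem_iUnion.2 ⟨b, Set.mem_iUnion.2 ⟨hlt, hγ⟩⟩)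
    intro b b' hne'
    rcases lt_or_gt_of_ne hne' with h | h
    · exact key b b' h
    · exact (key b' b h).symm
  have hZY : (⋃ b, Z b) = ⋃ b, Y b := by
    apply Set.Subset.antisymm
    · exact Set.iUnion_mono fun b => Set.diff_subset
    · intro γ hγ
      have hnem : {b : W | γ ∈ Y b}.Nonempty := by
        rcases Set.mem_iUnion.1 hγ with ⟨b, hb⟩
        exact ⟨b, hb⟩
      obtain ⟨m, hm, hmin⟩ := (wellFounded_lt (α := W)).has_min _ hnem
      refine Set.mem_iUnion.2 ⟨m, hm, ?_⟩
      intro hbad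
      rcases Set.mem_iUnion.1 hbad with ⟨c, hc⟩
      rcases Set.mem_iUnion.1 hc with ⟨hlt, hcY⟩
      exact hmin c hcY hlt
  -- the induced measure on W
  set ν : Measure W := Measure.ofMeasurable (fun E _ => M (⋃ b ∈ E, Z b))
    (by simp)
    (by
      intro E _ hdisj
      rw [Set.biUnion_iUnion]
      apply measure_iUnion _ (fun i => hms _)
      intro i j hij
      rw [Function.onFun, Set.disjoint_left]
      rintro γ hγi hγj
      rcases Set.mem_iUnion₂.1 hγi with ⟨b, hbE, hbZ⟩
      rcases Set.mem_iUnion₂.1 hγj with ⟨b', hbE', hbZ'⟩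
      rcases eq_or_ne b b' with rfl | hbb
      · exact Set.disjoint_left.1 (hdisj hij) hbE hbE'
      · exact Set.disjoint_left.1 (hZdisj b b' hbb) hbZ hbZ') with hν
  have hνapp : ∀ E : Set W, ν E = M (⋃ b ∈ E, Z b) := fun E =>
    Measure.ofMeasurable_apply E (W.meas E)
  have hνfin : ν Set.univ ≠ ⊤ := by
    rw [hνapp]
    exact ne_top_of_le_ne_top hfin (measure_mono (Set.subset_univ _))
  have hνpt : ∀ b : W, ν {b} = 0 := by
    intro b
    rw [hνapp]
    simp only [Set.mem_singleton_iff, Set.iUnion_iUnion_eq_left]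
    have : M (Z b) ≤ M (Y b) := measure_mono Set.diff_subset
    rw [hY b] at this
    exact le_antisymm this (zero_le)
  have := ulam ν hνfin hνpt
  rw [hνapp] at this
  simp only [Set.mem_univ, Set.iUnion_true] at this
  rw [hZY] at this
  exact hne this

/-- Measures of increasing `ω₁`-chains are bounded by the bounds of the members. -/
theorem chain_bound (hms : ∀ s : Set Ω, MeasurableSet s) (M : Measure Ω)
    (hfin : M Set.univ ≠ ⊤) (V : W → Set Ω) (hmono : Monotone V) {c : ℝ≥0∞}
    (hc : ∀ b, M (V b) ≤ c) : M (⋃ b, V b) ≤ c := by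
  set D : W → Set Ω := fun b => V b \ ⋃ c', ⋃ (_ : c' < b), V c' with hD
  have hDV : ∀ b, D b ⊆ V b := fun b => Set.diff_subset
  have hDdisj : Pairwise (Function.onFun Disjoint D) := by
    have key : ∀ b b' : W, b < b' → Disjoint (D b) (D b') := by
      intro b b' hlt
      rw [Set.disjoint_left]
      rintro γ ⟨hγ, -⟩ ⟨-, hno⟩
      exact hno (Set.mem_iUnion.2 ⟨b, Set.mem_iUnion.2 ⟨hlt, hγ⟩⟩)
    intro b b' hne'
    rcases lt_or_gt_of_ne hne' with h | h
    · exact key b b' h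
    · exact (key b' b h).symm
  have hDcover : (⋃ b, V b) ⊆ ⋃ b, D b := by
    intro γ hγ
    have hnem : {b : W | γ ∈ V b}.Nonempty := by
      rcases Set.mem_iUnion.1 hγ with ⟨b, hb⟩
      exact ⟨b, hb⟩
    obtain ⟨m, hm, hmin⟩ := (wellFounded_lt (α := W)).has_min _ hnem
    refine Set.mem_iUnion.2 ⟨m, hm, ?_⟩
    intro hbad
    rcases Set.mem_iUnion.1 hbad with ⟨c', hc'⟩
    rcases Set.mem_iUnion.1 hc' with ⟨hlt, hcY⟩
    exact hmin c' hcY hlt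
  have hP : Set.Countable {b : W | 0 < M (D b)} := by
    apply MeasureTheory.Measure.countable_meas_pos_of_disjoint_of_meas_iUnion_ne_top
      (As_mble := fun b => hms _) (As_disj := hDdisj)
    apply ne_top_of_le_ne_top hfin (measure_mono (Set.subset_univ _))
  obtain ⟨B, hB⟩ := W.countable_bounded hP
  have hnull : M (⋃ b, (if B < b then D b else (∅ : Set Ω))) = 0 := by
    apply nullUnion hms M hfin
    intro b
    by_cases hb : B < b
    · simp only [hb, if_true]
      by_contra hpos
      have : b ∈ {b : W | 0 < M (D b)} := pos_iff_ne_zero.2 hpos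
      exact absurd (hB b this) (not_le.2 hb)
    · simp [hb]
  have hsub : (⋃ b, V b) ⊆ V B ∪ ⋃ b, (if B < b then D b else (∅ : Set Ω)) := by
    intro γ hγ
    rcases Set.mem_iUnion.1 (hDcover hγ) with ⟨b, hb⟩
    rcases le_or_gt b B with h | h
    · exact Or.inl (hmono h (hDV b hb))
    · refine Or.inr (Set.mem_iUnion.2 ⟨b, ?_⟩)
      simp only [h, if_true]
      exact hb
  calc M (⋃ b, V b) ≤ M (V B ∪ ⋃ b, (if B < b then D b else (∅ : Set Ω))) := measure_mono hsub
    _ ≤ M (V B) + M (⋃ b, (if B < b then D b else (∅ : Set Ω))) := measure_union_le _ _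
    _ = M (V B) := by rw [hnull, add_zero]
    _ ≤ c := hc B

end Stmt8

namespace Stmt8
open MeasureTheory ENNReal

universe u

variable {Ω : Type u} [MeasurableSpace Ω]

/-- Key lemma: if all `γ`-sections of a relation are countable, then only countably many
`β` see a non-null set of `γ`'s. -/
theorem lemmaA (hms : ∀ s : Set Ω, MeasurableSet s) (M : Measure Ω)
    (h1 : M Set.univ = 1) (R : Ω → Ω → Prop)
    (hsec : ∀ γ : Ω, Set.Countable {β | R β γ}) :
    Set.Countable {β | M {γ | R β γ} ≠ 0} := by
  have hfin : M Set.univ ≠ ⊤ := by rw [h1]; exact ENNReal.one_ne_top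
  by_contra hunc
  -- some level set is uncountable
  obtain ⟨n₀, hn₀⟩ : ∃ n : ℕ, ¬ Set.Countable {β | (n : ℝ≥0∞)⁻¹ < M {γ | R β γ}} := by
    by_contra h
    push_neg at h
    apply hunc
    have hsub : {β | M {γ | R β γ} ≠ 0} ⊆
        ⋃ n : ℕ, {β | (n : ℝ≥0∞)⁻¹ < M {γ | R β γ}} := by
      intro β hβ
      obtain ⟨n, hn⟩ := ENNReal.exists_inv_nat_lt hβ
      exact Set.mem_iUnion.2 ⟨n, hn⟩
    exact (Set.countable_iUnion h).mono hsub
  set Wn : Set Ω := {β | (n₀ : ℝ≥0∞)⁻¹ < M {γ | R β γ}} with hWn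
  set ε : ℝ≥0∞ := (n₀ : ℝ≥0∞)⁻¹ with hεdef
  have hεne : ε ≠ 0 := ENNReal.inv_ne_zero.2 (ENNReal.natCast_ne_top n₀)
  have hεle : ε ≤ 1 := by
    obtain ⟨β, hβ⟩ : Wn.Nonempty := by
      rcases Wn.eq_empty_or_nonempty with h | h
      · exact absurd (by rw [h]; exact Set.countable_empty) hn₀
      · exact h
    calc ε ≤ M {γ | R β γ} := le_of_lt hβ
      _ ≤ M Set.univ := measure_mono (Set.subset_univ _)
      _ = 1 := h1
  -- embed ω₁ into Wn
  obtain ⟨φ⟩ : Nonempty (W ↪ ↥Wn) := by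
    rw [← Cardinal.lift_mk_le']
    have h2 : ℵ₀ < #↥Wn := by
      rw [← not_le]
      intro hle
      exact hn₀ (Set.countable_coe_iff.1 (Cardinal.mk_le_aleph0_iff.1 hle))
    have h3 : Order.succ (ℵ₀ : Cardinal.{u}) ≤ #↥Wn := Order.succ_le_of_lt h2
    rw [W.mk_eq]
    calc Cardinal.lift.{u} (Order.succ (ℵ₀ : Cardinal.{1}))
        = Order.succ (ℵ₀ : Cardinal.{max 1 u}) := by
          rw [Cardinal.lift_succ, Cardinal.lift_aleph0]
      _ = Cardinal.lift.{1} (Order.succ (ℵ₀ : Cardinal.{u})) := by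
          rw [Cardinal.lift_succ, Cardinal.lift_aleph0]
      _ ≤ Cardinal.lift.{1} #↥Wn := Cardinal.lift_le.2 h3
  set H : W → Set Ω := fun b => {γ | R ((φ b) : Ω) γ} with hH
  have hHε : ∀ b : W, ε < M (H b) := fun b => (φ b).2
  set U : W → Set Ω := fun b => ⋃ c, ⋃ (_ : b ≤ c), H c with hU
  have hUε : ∀ b : W, ε < M (U b) := by
    intro b
    refine lt_of_lt_of_le (hHε b) (measure_mono ?_)
    intro γ hγ
    exact Set.mem_iUnion.2 ⟨b, Set.mem_iUnion.2 ⟨le_refl b, hγ⟩⟩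
  set V : W → Set Ω := fun b => (U b)ᶜ with hV
  have hVmono : Monotone V := by
    intro b b' hbb
    apply Set.compl_subset_compl.2
    intro γ hγ
    rcases Set.mem_iUnion.1 hγ with ⟨c, hc⟩
    rcases Set.mem_iUnion.1 hc with ⟨hle, hγc⟩
    exact Set.mem_iUnion.2 ⟨c, Set.mem_iUnion.2 ⟨le_trans hbb hle, hγc⟩⟩
  have hVle : ∀ b : W, M (V b) ≤ 1 - ε := by
    intro b
    have := measure_compl (μ := M) (hms (U b)) (ne_top_of_le_ne_top hfin
      (measure_mono (Set.subset_univ _)))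
    rw [hV]
    rw [this, h1]
    exact tsub_le_tsub_left (hUε b).le 1
  have hchain : M (⋃ b, V b) ≤ 1 - ε := chain_bound hms M hfin V hVmono hVle
  have hL : M ((⋃ b, V b)ᶜ) ≠ 0 := by
    have := measure_compl (μ := M) (hms (⋃ b, V b)) (ne_top_of_le_ne_top hfin
      (measure_mono (Set.subset_univ _)))
    rw [this, h1]
    intro h0
    have h2 : (1 : ℝ≥0∞) - (1 - ε) = ε := ENNReal.sub_sub_cancel ENNReal.one_ne_top hεle
    have h3 : (1 : ℝ≥0∞) - (1 - ε) ≤ 1 - M (⋃ b, V b) := tsub_le_tsub_left hchain 1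
    rw [h2, h0] at h3
    exact hεne (le_antisymm h3 (zero_le))
  obtain ⟨γstar, hγstar⟩ := nonempty_of_measure_ne_zero hL
  have hγU : ∀ b : W, γstar ∈ U b := by
    intro b
    by_contra h
    exact hγstar (Set.mem_iUnion.2 ⟨b, h⟩)
  set Ξ : Set W := {c : W | R ((φ c) : Ω) γstar} with hΞ
  have hΞcnt : Set.Countable Ξ := by
    rw [← Set.countable_coe_iff]
    have : Countable ↥{β | R β γstar} := Set.countable_coe_iff.2 (hsec γstar)
    have hinj : Function.Injective (fun c : ↥Ξ => (⟨(φ c.1 : Ω), c.2⟩ : ↥{β | R β γstar})) := by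
      intro c d h
      simp only [Subtype.mk.injEq] at h
      exact Subtype.ext (φ.injective (Subtype.ext h))
    exact hinj.countable
  obtain ⟨B, hB⟩ := W.countable_bounded hΞcnt
  obtain ⟨b', hb'⟩ := W.exists_gt B
  rcases Set.mem_iUnion.1 (hγU b') with ⟨c, hc⟩
  rcases Set.mem_iUnion.1 hc with ⟨hle, hγc⟩
  have : c ∈ Ξ := hγc
  exact absurd (lt_of_lt_of_le hb' hle) (not_lt.2 (hB c this))

end Stmt8

namespace Stmt8
open MeasureTheory ENNReal

universe u

variable {Ω : Type u} [MeasurableSpace Ω]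

variable [DecidableEq Ω]

/-- The goodness hierarchy for the free-set construction. -/
def good (M : Measure Ω) (S : Finset Ω → Set Ω) : ℕ → Finset Ω → Ω → Prop
  | 0, F, β => β ∉ S F
  | (k+1), F, β => M {γ | ¬ good M S k (insert γ F) β} = 0

theorem good_zero (M : Measure Ω) (S : Finset Ω → Set Ω) (F : Finset Ω) (β : Ω) :
    good M S 0 F β ↔ β ∉ S F := Iff.rfl

theorem good_succ (M : Measure Ω) (S : Finset Ω → Set Ω) (k : ℕ) (F : Finset Ω) (β : Ω) :
    good M S (k+1) F β ↔ M {γ | ¬ good M S k (insert γ F) β} = 0 := Iff.rfl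

theorem countable_bad (hms : ∀ s : Set Ω, MeasurableSet s) (M : Measure Ω)
    (h1 : M Set.univ = 1) (S : Finset Ω → Set Ω) (hS : ∀ F, (S F).Countable) :
    ∀ (k : ℕ) (F : Finset Ω), Set.Countable {β | ¬ good M S k F β} := by
  intro k
  induction k with
  | zero =>
    intro F
    have : {β | ¬ good M S 0 F β} = S F := by
      ext β; simp [good_zero]
    rw [this]
    exact hS F
  | succ k ih =>
    intro F
    have : {β | ¬ good M S (k+1) F β} =
        {β | M {γ | ¬ good M S k (insert γ F) β} ≠ 0} := by
      ext β; simp [good_succ]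
    rw [this]
    exact lemmaA hms M h1 (fun β γ => ¬ good M S k (insert γ F) β) (fun γ => ih (insert γ F))

/-- The free-set theorem: relative to a diffuse countably additive probability measure defined
on all subsets, every set mapping with countable values has an infinite free set. -/
theorem exists_free (hms : ∀ s : Set Ω, MeasurableSet s) (M : Measure Ω) [NullSingletonClass M]
    (h1 : M Set.univ = 1) (S : Finset Ω → Set Ω) (hS : ∀ F, (S F).Countable) :
    ∃ A : Set Ω, A.Infinite ∧
      ∀ (F : Finset Ω) (β : Ω), ↑F ⊆ A → β ∈ A → β ∉ F → β ∉ S F := by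
  classical
  set Inv : Finset Ω → Prop := fun G =>
    ∀ (k : ℕ) (F : Finset Ω), F ⊆ G → ∀ β ∈ G, β ∉ F → good M S k F β with hInv
  have hInv0 : Inv ∅ := by
    intro k F hF β hβ
    simp at hβ
  -- the extension step
  have hstep : ∀ G : Finset Ω, Inv G → ∃ β : Ω, β ∉ G ∧ Inv (insert β G) := by
    intro G hG
    set Bad : Set Ω := (↑G : Set Ω) ∪
      ((⋃ F ∈ (↑G.powerset : Set (Finset Ω)), ⋃ k : ℕ, {β | ¬ good M S k F β}) ∪
       (⋃ β' ∈ (↑G : Set Ω), ⋃ F ∈ (↑(G.erase β').powerset : Set (Finset Ω)), ⋃ k : ℕ,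
          {γ | ¬ good M S k (insert γ F) β'})) with hBad
    have hBadnull : M Bad = 0 := by
      rw [hBad]
      apply measure_union_null
      · exact (G.countable_toSet).measure_zero M
      apply measure_union_null
      · rw [measure_biUnion_null_iff G.powerset.countable_toSet]
        intro F hF
        apply measure_iUnion_null
        intro k
        exact ((countable_bad hms M h1 S hS k F).measure_zero M)
      · rw [measure_biUnion_null_iff G.countable_toSet]
        intro β' hβ'
        rw [measure_biUnion_null_iff (G.erase β').powerset.countable_toSet]
        intro F hF
        apply measure_iUnion_null
        intro k
        have hF' : F ⊆ G.erase β' := Finset.mem_powerset.1 (Finset.mem_coe.1 hF)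
        have hgood : good M S (k+1) F β' := by
          apply hG (k+1) F (hF'.trans (G.erase_subset β')) β' (Finset.mem_coe.1 hβ')
          intro hmem
          exact (Finset.notMem_erase β' G) (hF' hmem)
        exact (good_succ M S k F β').1 hgood
    have hne : Bad ≠ Set.univ := by
      intro h
      rw [h, h1] at hBadnull
      exact one_ne_zero hBadnull
    obtain ⟨β, hβ⟩ : ∃ β : Ω, β ∉ Bad := by
      by_contra h
      push_neg at h
      exact hne (Set.eq_univ_of_forall h)
    have hβG : β ∉ G := fun h => hβ (Or.inl h)
    have hβ2 : ∀ (F : Finset Ω), F ⊆ G → ∀ k, good M S k F β := by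
      intro F hF k
      by_contra h
      exact hβ (Or.inr (Or.inl (Set.mem_biUnion (Finset.mem_coe.2 (Finset.mem_powerset.2 hF))
        (Set.mem_iUnion.2 ⟨k, h⟩))))
    have hβ3 : ∀ β' ∈ G, ∀ (F : Finset Ω), F ⊆ G.erase β' → ∀ k,
        good M S k (insert β F) β' := by
      intro β' hβ' F hF k
      by_contra h
      exact hβ (Or.inr (Or.inr (Set.mem_biUnion (Finset.mem_coe.2 hβ') (Set.mem_biUnion
        (Finset.mem_coe.2 (Finset.mem_powerset.2 hF)) (Set.mem_iUnion.2 ⟨k, h⟩)))))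
    refine ⟨β, hβG, ?_⟩
    intro k F hF β' hβ'mem hβ'F
    rcases Finset.mem_insert.1 hβ'mem with rfl | hβ'G
    · -- β' = β
      have hFG : F ⊆ G := by
        intro y hy
        rcases Finset.mem_insert.1 (hF hy) with rfl | h
        · exact absurd hy hβ'F
        · exact h
      exact hβ2 F hFG k
    · by_cases hβF : β ∈ F
      · have hFG : F.erase β ⊆ G.erase β' := by
          intro y hy
          rcases Finset.mem_erase.1 hy with ⟨hyβ, hyF⟩
          refine Finset.mem_erase.2 ⟨?_, ?_⟩
          · rintro rfl; exact hβ'F hyF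
          · rcases Finset.mem_insert.1 (hF hyF) with rfl | h
            · exact absurd rfl hyβ
            · exact h
        have := hβ3 β' hβ'G (F.erase β) hFG k
        rwa [Finset.insert_erase hβF] at this
      · have hFG : F ⊆ G := by
          intro y hy
          rcases Finset.mem_insert.1 (hF hy) with rfl | h
          · exact absurd hy hβF
          · exact h
        exact hG k F hFG β' hβ'G hβ'F
  -- build the increasing chain
  have hchoice : ∀ p : {G : Finset Ω // Inv G}, ∃ β : Ω, β ∉ p.1 ∧ Inv (insert β p.1) :=
    fun p => hstep p.1 p.2
  choose pick hpick1 hpick2 using hchoice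
  let T : ℕ → {G : Finset Ω // Inv G} := fun n =>
    Nat.rec ⟨∅, hInv0⟩ (fun _ p => ⟨insert (pick p) p.1, hpick2 p⟩) n
  have hTsucc : ∀ n, (T (n+1)).1 = insert (pick (T n)) (T n).1 := fun n => rfl
  have hTmono : ∀ m n, m ≤ n → (T m).1 ⊆ (T n).1 := by
    intro m n hmn
    induction n with
    | zero => rw [Nat.le_zero.1 hmn]
    | succ n ih =>
      rcases Nat.lt_or_ge m (n+1) with h | h
      · have := ih (Nat.lt_succ_iff.1 h)
        refine this.trans ?_
        rw [hTsucc n]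
        exact Finset.subset_insert _ _
      · rw [Nat.le_antisymm hmn h]
  set A : Set Ω := ⋃ n, ((T n).1 : Set Ω) with hA
  have hmemA : ∀ n, pick (T n) ∈ A := by
    intro n
    apply Set.mem_iUnion.2 ⟨n+1, ?_⟩
    rw [hTsucc n]
    exact Finset.mem_insert_self _ _
  have hinj : Function.Injective (fun n => pick (T n)) := by
    have key : ∀ m n, m < n → pick (T m) ≠ pick (T n) := by
      intro m n hmn heq
      apply hpick1 (T n)
      rw [← heq]
      have : pick (T m) ∈ (T (m+1)).1 := by
        rw [hTsucc m]; exact Finset.mem_insert_self _ _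
      exact hTmono (m+1) n hmn this
    intro m n h
    rcases lt_trichotomy m n with hlt | heq | hgt
    · exact absurd h (key m n hlt)
    · exact heq
    · exact absurd h.symm (key n m hgt)
  refine ⟨A, Set.infinite_of_injective_forall_mem hinj hmemA, ?_⟩
  intro F β hFA hβA hβF
  -- find a stage containing F and β
  have hy : ∀ y : Ω, y ∈ A → ∃ n, y ∈ (T n).1 := by
    intro y hyA
    exact Set.mem_iUnion.1 hyA
  set g : Ω → ℕ := fun y => if h : ∃ n, y ∈ (T n).1 then Nat.find h else 0 with hg
  have hgmem : ∀ y : Ω, y ∈ A → y ∈ (T (g y)).1 := by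
    intro y hyA
    rw [hg]
    simp only [hy y hyA, dif_pos]
    exact Nat.find_spec (hy y hyA)
  set N : ℕ := (insert β F).sup g with hN
  have hsubN : ∀ y ∈ insert β F, y ∈ (T N).1 := by
    intro y hyf
    have hyA : y ∈ A := by
      rcases Finset.mem_insert.1 hyf with rfl | h
      · exact hβA
      · exact hFA h
    exact hTmono (g y) N (Finset.le_sup hyf) (hgmem y hyA)
  have hFsub : F ⊆ (T N).1 := fun y hy' => hsubN y (Finset.mem_insert_of_mem hy')
  have hβmem : β ∈ (T N).1 := hsubN β (Finset.mem_insert_self _ _)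
  exact (T N).2 0 F hFsub β hβmem hβF

end Stmt8


namespace Stmt8
open MeasureTheory ENNReal

universe u v

theorem main
    (μ : Set ℝ → ENNReal)
    (hμ0 : μ ∅ = 0)
    (hadd : ∀ f : ℕ → Set ℝ, Pairwise (Function.onFun Disjoint f) →
      μ (⋃ i, f i) = ∑' i, μ (f i))
    (hleb : ∀ s : Set ℝ, MeasurableSet s → μ s = MeasureTheory.volume s)
    (X : Type v) [NormedAddCommGroup X] [NormedSpace ℝ X]
    (x : {α : Ordinal.{u} // α < Cardinal.continuum.ord} → X)
    (hnorm : ∀ α, ‖x α‖ = 1)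
    (hweak : ∀ f : X →L[ℝ] ℝ, ∀ ε : ℝ, 0 < ε → {α | ε ≤ |f (x α)|}.Finite) :
    ∃ A : Set {α : Ordinal.{u} // α < Cardinal.continuum.ord}, A.Infinite ∧
      ∃ K : ℝ, 1 ≤ K ∧
        ∀ s : Finset {α : Ordinal.{u} // α < Cardinal.continuum.ord}, ↑s ⊆ A →
          ∀ a : {α : Ordinal.{u} // α < Cardinal.continuum.ord} → ℝ, ∀ t ⊆ s,
            ‖∑ α ∈ t, a α • x α‖ ≤ K * ‖∑ α ∈ s, a α • x α‖ := by
  classical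
  -- a bijection between the index set and ℝ
  obtain ⟨e⟩ : Nonempty ({α : Ordinal.{u} // α < Cardinal.continuum.ord} ≃ ℝ) := by
    refine Cardinal.lift_mk_eq'.1 ?_
    have h1 : #{α : Ordinal.{u} // α < Cardinal.continuum.ord}
        = Cardinal.lift.{u+1} (Cardinal.continuum.ord).card := Ordinal.mk_Iio_ordinal _
    rw [Cardinal.mk_real, h1, Cardinal.card_ord, Cardinal.lift_continuum,
      Cardinal.lift_uzero, Cardinal.lift_continuum]
  letI : MeasurableSpace {α : Ordinal.{u} // α < Cardinal.continuum.ord} := ⊤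
  have hms : ∀ s : Set {α : Ordinal.{u} // α < Cardinal.continuum.ord}, MeasurableSet s :=
    fun _ => trivial
  -- transfer μ to the index set
  set M : Measure {α : Ordinal.{u} // α < Cardinal.continuum.ord} :=
    Measure.ofMeasurable (fun A _ => μ ((↑e '' A) ∩ Set.Icc (0:ℝ) 1))
      (by
        rw [Set.image_empty, Set.empty_inter]
        exact hμ0)
      (by
        intro f _ hdisj
        rw [Set.image_iUnion, Set.iUnion_inter]
        apply hadd
        intro i j hij
        rw [Function.onFun, Set.disjoint_left]
        rintro r ⟨⟨β, hβ, rfl⟩, -⟩ ⟨⟨β', hβ', hββ'⟩, -⟩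
        have hbb : β = β' := e.injective hββ'.symm
        rw [hbb] at hβ
        exact Set.disjoint_left.1 (hdisj hij) hβ hβ') with hM
  have hMapp : ∀ A, M A = μ ((↑e '' A) ∩ Set.Icc (0:ℝ) 1) := fun A =>
    Measure.ofMeasurable_apply A (hms A)
  have hMuniv : M Set.univ = 1 := by
    rw [hMapp, Set.image_univ, Equiv.range_eq_univ, Set.univ_inter,
      hleb _ measurableSet_Icc, Real.volume_Icc]
    norm_num
  haveI hMno : NullSingletonClass M := by
    constructor
    intro β
    rw [hMapp, Set.image_singleton]
    by_cases h : (e β : ℝ) ∈ Set.Icc (0:ℝ) 1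
    · rw [Set.inter_eq_left.2 (Set.singleton_subset_iff.2 h),
        hleb _ (measurableSet_singleton _), Real.volume_singleton]
    · rw [Set.singleton_inter_eq_empty.2 h, hμ0]
  -- the Banach space data
  have h0ord : (0 : Ordinal.{u}) < Cardinal.continuum.ord := by
    rw [Cardinal.lt_ord]
    simpa using lt_trans Cardinal.aleph0_pos Cardinal.aleph0_lt_continuum
  haveI : Nontrivial X := by
    refine nontrivial_of_ne (x ⟨0, h0ord⟩) 0 ?_
    intro h
    have h2 := hnorm ⟨0, h0ord⟩
    rw [h, norm_zero] at h2
    exact one_ne_zero h2.symm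
  have hdual : ∀ v : X, ∃ g : X →L[ℝ] ℝ, ‖g‖ = 1 ∧ g v = ‖v‖ := fun v =>
    exists_dual_vector' ℝ v
  choose normf hnormf1 hnormf2 using hdual
  -- supports of functionals are countable
  have hsupp : ∀ g : X →L[ℝ] ℝ, Set.Countable {γ : {α : Ordinal.{u} //
      α < Cardinal.continuum.ord} | g (x γ) ≠ 0} := by
    intro g
    have hsub : {γ | g (x γ) ≠ 0} ⊆ ⋃ n : ℕ, {γ | (1/(n+1) : ℝ) ≤ |g (x γ)|} := by
      intro γ hγ
      obtain ⟨n, hn⟩ := exists_nat_one_div_lt (abs_pos.2 hγ)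
      exact Set.mem_iUnion.2 ⟨n, hn.le⟩
    refine Set.Countable.mono hsub (Set.countable_iUnion fun n => ?_)
    exact (hweak g (1/(n+1)) (by positivity)).countable
  -- the set mapping
  set S : Finset {α : Ordinal.{u} // α < Cardinal.continuum.ord} →
      Set {α : Ordinal.{u} // α < Cardinal.continuum.ord} :=
    fun F => {γ | ∃ q : {y // y ∈ F} → ℚ,
      normf (∑ y ∈ F.attach, (q y : ℝ) • x y.1) (x γ) ≠ 0} with hSdef
  have hScnt : ∀ F, (S F).Countable := by
    intro F
    have h1 : S F = ⋃ q : {y // y ∈ F} → ℚ,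
        {γ | normf (∑ y ∈ F.attach, (q y : ℝ) • x y.1) (x γ) ≠ 0} :=
      Set.setOf_exists _
    rw [h1]
    exact Set.countable_iUnion fun q => hsupp _
  obtain ⟨A, hAinf, hAfree⟩ := exists_free hms M hMuniv S hScnt
  refine ⟨A, hAinf, 1, le_refl 1, ?_⟩
  intro s hsA a t hts
  rw [one_mul]
  apply _root_.le_of_forall_pos_le_add
  intro ε hε
  -- a norming functional with rational coefficients for the inner sum
  set δ : ℝ := ε / (2 * (t.card + 1)) with hδ
  have hδpos : 0 < δ := by positivity
  have hq : ∀ y : {y // y ∈ t}, ∃ q : ℚ, |a y.1 - (q : ℝ)| < δ := fun y =>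
    exists_rat_near (a y.1) hδpos
  choose q hqnear using hq
  set v : X := ∑ α ∈ t, a α • x α with hv
  set w : X := ∑ y ∈ t.attach, (q y : ℝ) • x y.1 with hw
  have hvw : ‖v - w‖ ≤ ε / 2 := by
    have hv' : v = ∑ y ∈ t.attach, a y.1 • x y.1 := by
      rw [hv, ← Finset.sum_attach t (fun α => a α • x α)]
    have h2 : v - w = ∑ y ∈ t.attach, (a y.1 - (q y : ℝ)) • x y.1 := by
      rw [hv', hw, ← Finset.sum_sub_distrib]
      congr 1
      ext y
      rw [sub_smul]
    rw [h2]
    have hcard : (t.card : ℝ) * δ ≤ ε / 2 := by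
      have h2 : ((t.card : ℝ) + 1) * δ = ε / 2 := by
        rw [hδ]
        field_simp
      rw [← h2]
      apply mul_le_mul_of_nonneg_right _ hδpos.le
      linarith
    calc ‖∑ y ∈ t.attach, (a y.1 - (q y : ℝ)) • x y.1‖
        ≤ ∑ y ∈ t.attach, ‖(a y.1 - (q y : ℝ)) • x y.1‖ := norm_sum_le _ _
      _ = ∑ y ∈ t.attach, |a y.1 - (q y : ℝ)| := by
          apply Finset.sum_congr rfl
          intro y _
          rw [norm_smul, hnorm, mul_one, Real.norm_eq_abs]
      _ ≤ ∑ _y ∈ t.attach, δ := Finset.sum_le_sum fun y _ => (hqnear y).le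
      _ = t.card * δ := by rw [Finset.sum_const, Finset.card_attach, nsmul_eq_mul]
      _ ≤ ε / 2 := hcard
  set g : X →L[ℝ] ℝ := normf w with hg
  have hgv : ‖v‖ - ε ≤ g v := by
    have h1 : g v = g w + g (v - w) := by
      rw [← map_add]
      congr 1
      abel
    have h2 : g w = ‖w‖ := hnormf2 w
    have h3 : |g (v - w)| ≤ ‖v - w‖ := by
      calc |g (v - w)| = ‖g (v - w)‖ := (Real.norm_eq_abs _).symm
        _ ≤ ‖g‖ * ‖v - w‖ := g.le_opNorm _
        _ = ‖v - w‖ := by rw [hnormf1, one_mul]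
    have h4 : ‖v‖ - ‖v - w‖ ≤ ‖w‖ := by
      have h5 := norm_sub_norm_le v w
      linarith
    have h6 : -‖v - w‖ ≤ g (v - w) := (abs_le.1 h3).1
    linarith [hvw]
  -- g kills the coordinates outside t
  have hkill : ∀ α ∈ s \ t, g (x α) = 0 := by
    intro α hα
    rcases Finset.mem_sdiff.1 hα with ⟨hαs, hαt⟩
    have hαA : α ∈ A := hsA hαs
    have htA : ↑t ⊆ A := fun y hy => hsA (hts hy)
    have hfree : α ∉ S t := hAfree t α htA hαA hαt
    have hfree' : ∀ qq : {y // y ∈ t} → ℚ,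
        normf (∑ y ∈ t.attach, (qq y : ℝ) • x y.1) (x α) = 0 := by
      intro qq
      by_contra hne
      exact hfree ⟨qq, hne⟩
    exact hfree' q
  have hsplit : g (∑ α ∈ s, a α • x α) = g v := by
    rw [hv, ← Finset.sum_sdiff hts, map_add]
    have hz : g (∑ α ∈ s \ t, a α • x α) = 0 := by
      rw [map_sum]
      apply Finset.sum_eq_zero
      intro α hα
      rw [ContinuousLinearMap.map_smul, hkill α hα, smul_zero]
    rw [hz, zero_add]
  have hfinal : g (∑ α ∈ s, a α • x α) ≤ ‖∑ α ∈ s, a α • x α‖ := by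
    calc g (∑ α ∈ s, a α • x α) ≤ |g (∑ α ∈ s, a α • x α)| := le_abs_self _
      _ = ‖g (∑ α ∈ s, a α • x α)‖ := (Real.norm_eq_abs _).symm
      _ ≤ ‖g‖ * ‖∑ α ∈ s, a α • x α‖ := g.le_opNorm _
      _ = ‖∑ α ∈ s, a α • x α‖ := by rw [hnormf1, one_mul]
  have : ‖v‖ - ε ≤ ‖∑ α ∈ s, a α • x α‖ := le_trans hgv (hsplit ▸ hfinal)
  rw [hv] at this
  linarith

end Stmt8


/-- If the Lebesgue measure extends to a countably additive measure defined on all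
subsets of `ℝ`, then every normalized weakly null sequence of length continuum in a
Banach space contains an infinite unconditional basic subsequence. -/
theorem stmt8
    (μ : Set ℝ → ENNReal)
    (hμ0 : μ ∅ = 0)
    (hadd : ∀ f : ℕ → Set ℝ, Pairwise (Function.onFun Disjoint f) →
      μ (⋃ i, f i) = ∑' i, μ (f i))
    (hleb : ∀ s : Set ℝ, MeasurableSet s → μ s = MeasureTheory.volume s)
    (X : Type*) [NormedAddCommGroup X] [NormedSpace ℝ X] [CompleteSpace X]
    (x : {α : Ordinal // α < Cardinal.continuum.ord} → X)
    (hnorm : ∀ α, ‖x α‖ = 1)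
    (hweak : ∀ f : X →L[ℝ] ℝ, ∀ ε : ℝ, 0 < ε → {α | ε ≤ |f (x α)|}.Finite) :
    ∃ A : Set {α : Ordinal // α < Cardinal.continuum.ord}, A.Infinite ∧
      ∃ K : ℝ, 1 ≤ K ∧
        ∀ s : Finset {α : Ordinal // α < Cardinal.continuum.ord}, ↑s ⊆ A →
          ∀ a : {α : Ordinal // α < Cardinal.continuum.ord} → ℝ, ∀ t ⊆ s,
            ‖∑ α ∈ t, a α • x α‖ ≤ K * ‖∑ α ∈ s, a α • x α‖ := by
  exact Stmt8.main μ hμ0 hadd hleb X x hnorm hweak
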